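/- arXiv:1611.08566 — 3 statements merged into one kernel-verified Lean document; each statement's English description precedes it below -/
import Mathlib

section
/- Let O be a complete discrete valuation ring with maximal ideal m and fraction field F, and let n ≥ 1. Let M₁, M₂ ∈ Mₙ(O) be matrices with M₁ − Y ∈ Mₙ(m) and M₂ − Y ∈ Mₙ(m) (all entries in m). If M₁ and M₂ have the same characteristic polynomial, then there exists g ∈ GLₙ(O) with g − 1 ∈ Mₙ(m) such that g M₁ g⁻¹ = M₂. -/
open IsLocalRing

/-- The regular nilpotent matrix `Y` with `(i, i+1)`-entries equal to `1` and all
other entries `0`. -/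
def Ymat (n : ℕ) (R : Type*) [CommRing R] : Matrix (Fin n) (Fin n) R :=
  fun i j => if (j : ℕ) = (i : ℕ) + 1 then 1 else 0

section Aux

variable {R : Type*} [CommRing R] {n : ℕ}

/-- The matrix whose `j`-th column is `M^j` applied to the last basis vector. -/
def Pmat (M : Matrix (Fin (n+1)) (Fin (n+1)) R) : Matrix (Fin (n+1)) (Fin (n+1)) R :=
  fun i j => (M ^ (j : ℕ)) i (Fin.last n)

/-- Companion-type matrix of a polynomial. -/
def Cmat (p : Polynomial R) : Matrix (Fin (n+1)) (Fin (n+1)) R :=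
  fun i j => if (j : ℕ) = n then -(p.coeff i) else if (i : ℕ) = (j : ℕ) + 1 then 1 else 0

lemma Ypow (j : ℕ) (i k : Fin (n+1)) :
    (Ymat (n+1) R ^ j) i k = if (k : ℕ) = (i : ℕ) + j then 1 else 0 := by
  induction j generalizing i k with
  | zero =>
    simp [Matrix.one_apply, Fin.ext_iff, eq_comm]
  | succ j ih =>
    rw [pow_succ, Matrix.mul_apply]
    by_cases hij : (i : ℕ) + j ≤ n
    · rw [Finset.sum_eq_single (⟨(i : ℕ) + j, by omega⟩ : Fin (n+1))]
      · simp [ih, Ymat, add_assoc]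
      · intro b _ hb
        rw [ih]
        have hb' : ¬ ((b : ℕ) = (i : ℕ) + j) := fun h => hb (Fin.ext h)
        simp [hb']
      · simp
    · have h0 : ∀ b : Fin (n+1), (Ymat (n+1) R ^ j) i b * Ymat (n+1) R b k = 0 := by
        intro b
        rw [ih]
        have : ¬ ((b : ℕ) = (i : ℕ) + j) := by omega
        simp [this]
      rw [Finset.sum_congr rfl (fun b _ => h0 b), Finset.sum_const_zero]
      have : ¬ ((k : ℕ) = (i : ℕ) + (j + 1)) := by omega
      simp [this]

lemma MP_eq (M : Matrix (Fin (n+1)) (Fin (n+1)) R) [Nontrivial R] :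
    M * Pmat M = Pmat M * Cmat M.charpoly := by
  have hdeg : M.charpoly.natDegree = n + 1 := by
    rw [Matrix.charpoly_natDegree_eq_dim, Fintype.card_fin]
  have hCH : (M ^ (n+1)) = -∑ j : Fin (n+1), M.charpoly.coeff j • M ^ (j : ℕ) := by
    have h0 := Matrix.aeval_self_charpoly M
    rw [Polynomial.aeval_eq_sum_range, hdeg, Finset.sum_range_succ] at h0
    have hlead : M.charpoly.coeff (n+1) = 1 := by
      have := Matrix.charpoly_monic M
      rw [Polynomial.Monic, Polynomial.leadingCoeff, hdeg] at this
      exact this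
    rw [hlead, one_smul] at h0
    rw [Fin.sum_univ_eq_sum_range (fun j => M.charpoly.coeff j • M ^ j)]
    linear_combination (norm := module) h0
  ext i k
  rw [Matrix.mul_apply, Matrix.mul_apply]
  have hL : ∑ j, M i j * (Pmat M) j k = (M ^ ((k : ℕ) + 1)) i (Fin.last n) := by
    rw [pow_succ']
    rw [Matrix.mul_apply]
    rfl
  rw [hL]
  by_cases hk : (k : ℕ) = n
  · have : ∀ j : Fin (n+1), (Pmat M) i j * (Cmat M.charpoly) j k
        = -(M.charpoly.coeff j • M ^ (j : ℕ)) i (Fin.last n) := by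
      intro j
      simp only [Cmat, hk, if_pos, Pmat, Matrix.neg_apply, Matrix.smul_apply, smul_eq_mul]
      ring
    rw [Finset.sum_congr rfl (fun j _ => this j)]
    have : ((k : ℕ) + 1) = n + 1 := by omega
    rw [this, hCH]
    simp [Matrix.neg_apply, Matrix.sum_apply]
  · rw [Finset.sum_eq_single (⟨(k : ℕ) + 1, by omega⟩ : Fin (n+1))]
    · simp [Cmat, Pmat, hk]
    · intro b _ hb
      simp only [Cmat]
      have h2 : ¬ ((b : ℕ) = (k : ℕ) + 1) := fun h => hb (Fin.ext h)
      rw [if_neg hk, if_neg h2, mul_zero]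
    · simp

/-- `Pmat` commutes with ring hom mapping. -/
lemma Pmat_map {S : Type*} [CommRing S] (f : R →+* S) (M : Matrix (Fin (n+1)) (Fin (n+1)) R) :
    (Pmat M).map f = Pmat (M.map f) := by
  ext i j
  have : (M.map f) ^ (j : ℕ) = (M ^ (j : ℕ)).map f := by
    simpa using (map_pow f.mapMatrix M (j : ℕ)).symm
  simp [Pmat, Matrix.map_apply, this]

lemma Ymat_map {S : Type*} [CommRing S] (f : R →+* S) :
    (Ymat (n+1) R).map f = Ymat (n+1) S := by
  ext i j
  simp [Ymat, Matrix.map_apply, apply_ite f]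

/-- The antidiagonal matrix. -/
def Jmat (n : ℕ) (R : Type*) [CommRing R] : Matrix (Fin (n+1)) (Fin (n+1)) R :=
  fun i j => if (i : ℕ) + (j : ℕ) = n then 1 else 0

lemma Pmat_Y : Pmat (Ymat (n+1) R) = Jmat n R := by
  ext i j
  rw [Pmat, Ypow]
  simp only [Jmat, Fin.val_last]
  congr 1
  simp only [eq_iff_iff]
  omega

lemma Jmat_mul_Jmat : Jmat n R * Jmat n R = 1 := by
  ext i k
  rw [Matrix.mul_apply]
  rw [Finset.sum_eq_single (⟨n - (i : ℕ), by omega⟩ : Fin (n+1))]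
  · have hi : (i : ℕ) ≤ n := by omega
    simp only [Jmat, Matrix.one_apply, Fin.ext_iff]
    have h1 : (i : ℕ) + (n - (i : ℕ)) = n := by omega
    rw [if_pos h1, one_mul]
    congr 1
    simp only [eq_iff_iff]
    omega
  · intro b _ hb
    have hb' : (b : ℕ) ≠ n - (i : ℕ) := fun h => hb (Fin.ext h)
    simp only [Jmat]
    have : ¬ ((i : ℕ) + (b : ℕ) = n) := by omega
    rw [if_neg this, zero_mul]
  · simp

end Aux

/-- Let `O` be a complete discrete valuation ring with maximal ideal
`m` and let `n ≥ 1`. If `M₁, M₂ ∈ Mₙ(O)` satisfy `M₁ - Y, M₂ - Y ∈ Mₙ(m)` and have the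
same characteristic polynomial, then there exists `g ∈ GLₙ(O)` with `g - 1 ∈ Mₙ(m)`
such that `g M₁ g⁻¹ = M₂`. -/
theorem stmt5 {O : Type*} [CommRing O] [IsDomain O] [IsDiscreteValuationRing O]
    [IsAdicComplete (maximalIdeal O) O]
    (n : ℕ) (hn : 1 ≤ n) (M₁ M₂ : Matrix (Fin n) (Fin n) O)
    (hM₁ : ∀ i j : Fin n, (M₁ - Ymat n O) i j ∈ maximalIdeal O)
    (hM₂ : ∀ i j : Fin n, (M₂ - Ymat n O) i j ∈ maximalIdeal O)
    (hchar : M₁.charpoly = M₂.charpoly) :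
    ∃ g : GL (Fin n) O,
      (∀ i j : Fin n,
        ((g : Matrix (Fin n) (Fin n) O) - 1) i j ∈ maximalIdeal O) ∧
      (g : Matrix (Fin n) (Fin n) O) * M₁ *
          ((g⁻¹ : GL (Fin n) O) : Matrix (Fin n) (Fin n) O) = M₂ := by
  obtain ⟨m, rfl⟩ : ∃ m, n = m + 1 := ⟨n - 1, by omega⟩
  set f : O →+* ResidueField O := residue O with hf
  -- reductions of M₁, M₂ are Y
  have hred : ∀ M : Matrix (Fin (m+1)) (Fin (m+1)) O,
      (∀ i j, (M - Ymat (m+1) O) i j ∈ maximalIdeal O) →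
      M.map f = Ymat (m+1) (ResidueField O) := by
    intro M hM
    rw [← Ymat_map f]
    ext i j
    have := hM i j
    rw [Matrix.sub_apply] at this
    have h0 : f (M i j - Ymat (m+1) O i j) = 0 := Ideal.Quotient.eq_zero_iff_mem.mpr this
    rw [map_sub, sub_eq_zero] at h0
    simpa [Matrix.map_apply] using h0
  have h1 : M₁.map f = Ymat (m+1) (ResidueField O) := hred M₁ hM₁
  have h2 : M₂.map f = Ymat (m+1) (ResidueField O) := hred M₂ hM₂
  -- the P matrices are invertible
  have hPunit : ∀ M : Matrix (Fin (m+1)) (Fin (m+1)) O,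
      M.map f = Ymat (m+1) (ResidueField O) → IsUnit (Pmat M) := by
    intro M hM
    rw [Matrix.isUnit_iff_isUnit_det]
    by_contra h
    have hmem : (Pmat M).det ∈ maximalIdeal O := by
      rw [IsLocalRing.mem_maximalIdeal]
      exact mem_nonunits_iff.mpr h
    have h0 : f ((Pmat M).det) = 0 := Ideal.Quotient.eq_zero_iff_mem.mpr hmem
    have hPm : (Pmat M).map f = Jmat m (ResidueField O) := by
      rw [Pmat_map, hM, Pmat_Y]
    have hdet : ((Pmat M).map f).det = f ((Pmat M).det) := by
      exact (RingHom.map_det f (Pmat M)).symm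
    rw [hPm, h0] at hdet
    have hJJ : (Jmat m (ResidueField O)).det * (Jmat m (ResidueField O)).det = 1 := by
      rw [← Matrix.det_mul, Jmat_mul_Jmat, Matrix.det_one]
    have hJ : IsUnit (Jmat m (ResidueField O)).det := IsUnit.of_mul_eq_one _ hJJ
    rw [hdet] at hJ
    exact hJ.ne_zero rfl
  obtain ⟨u₁, hu₁⟩ := hPunit M₁ h1
  obtain ⟨u₂, hu₂⟩ := hPunit M₂ h2
  refine ⟨u₂ * u₁⁻¹, ?_, ?_⟩
  · -- g ≡ 1 mod m
    intro i j
    set F : Matrix (Fin (m+1)) (Fin (m+1)) O →* Matrix (Fin (m+1)) (Fin (m+1)) (ResidueField O) :=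
      (f.mapMatrix : Matrix (Fin (m+1)) (Fin (m+1)) O →+* _).toMonoidHom with hF
    have hF' : ∀ A : Matrix (Fin (m+1)) (Fin (m+1)) O, F A = A.map f := fun A => rfl
    have hmapu : Units.map F (u₂ * u₁⁻¹) = 1 := by
      have he : Units.map F u₁ = Units.map F u₂ := by
        apply Units.ext
        show F (u₁ : Matrix _ _ O) = F (u₂ : Matrix _ _ O)
        rw [hF', hF', hu₁, hu₂, Pmat_map, Pmat_map, h1, h2]
      rw [map_mul, map_inv, he, mul_inv_cancel]
    have hgmap : ((u₂ * u₁⁻¹ : (Matrix (Fin (m+1)) (Fin (m+1)) O)ˣ) : Matrix (Fin (m+1)) (Fin (m+1)) O).map f = (1 : Matrix (Fin (m+1)) (Fin (m+1)) (ResidueField O)) := by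
      have h := congrArg Units.val hmapu
      rw [Units.coe_map, Units.val_one] at h
      exact h
    have h0 : f ((((u₂ * u₁⁻¹ : (Matrix (Fin (m+1)) (Fin (m+1)) O)ˣ) : Matrix _ _ O) - 1) i j) = 0 := by
      rw [Matrix.sub_apply, map_sub, sub_eq_zero]
      have := congrFun (congrFun hgmap i) j
      simpa [Matrix.map_apply, Matrix.one_apply, apply_ite f] using this
    exact Ideal.Quotient.eq_zero_iff_mem.mp h0
  · -- conjugation
    have e₁ : M₁ * (u₁ : Matrix _ _ O) = (u₁ : Matrix _ _ O) * Cmat M₁.charpoly := by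
      rw [hu₁]; exact MP_eq M₁
    have e₂ : M₂ * (u₂ : Matrix _ _ O) = (u₂ : Matrix _ _ O) * Cmat M₁.charpoly := by
      rw [hu₂, hchar]; exact MP_eq M₂
    have key : u₂.val * (u₁⁻¹).val * M₁ * (u₁.val * (u₂⁻¹).val) = M₂ := by
      calc u₂.val * (u₁⁻¹).val * M₁ * (u₁.val * (u₂⁻¹).val)
          = u₂.val * ((u₁⁻¹).val * (M₁ * u₁.val)) * (u₂⁻¹).val := by noncomm_ring
        _ = u₂.val * Cmat M₁.charpoly * (u₂⁻¹).val := by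
            rw [e₁, Units.inv_mul_cancel_left]
        _ = M₂ * u₂.val * (u₂⁻¹).val := by rw [e₂]
        _ = M₂ := Units.mul_inv_cancel_right _ _
    show (u₂ * u₁⁻¹).val * M₁ * ((u₂ * u₁⁻¹)⁻¹).val = M₂
    rw [mul_inv_rev, inv_inv, Units.val_mul, Units.val_mul]
    exact key
end

section
/- Let O be a complete discrete valuation ring with uniformizer ϖ, let n ≥ 1, and let m ≥ 1 be an integer. For every M ∈ Mₙ(O) with M − Y ∈ ϖ^m·Mₙ(O), there exists g ∈ GLₙ(O) with g − 1 ∈ ϖ^m·Mₙ(O) such that g M g⁻¹ is a companion-type matrix all of whose bottom-row entries lie in ϖ^m·O. -/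
open Matrix Polynomial

lemma Ymat_pow {n : ℕ} (R : Type*) [CommRing R] (k : ℕ) (i j : Fin n) :
    ((Ymat n R) ^ k) i j = if (j : ℕ) = (i : ℕ) + k then 1 else 0 := by
  induction k generalizing i with
  | zero => simp [Matrix.one_apply, Fin.ext_iff, eq_comm]
  | succ k ih =>
    rw [pow_succ', Matrix.mul_apply]
    by_cases h : (i : ℕ) + 1 < n
    · rw [Finset.sum_eq_single (⟨(i : ℕ) + 1, h⟩ : Fin n)]
      · simp [Ymat, ih, add_assoc, add_comm 1 k]
      · intro b _ hb
        have hbv : (b : ℕ) ≠ (i : ℕ) + 1 := fun hc => hb (Fin.ext hc)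
        simp [Ymat, hbv]
      · intro hmem; exact absurd (Finset.mem_univ _) hmem
    · have h2 : (j : ℕ) ≠ (i : ℕ) + (k + 1) := by
        have := j.isLt; omega
      rw [if_neg h2]
      apply Finset.sum_eq_zero
      intro l _
      have hl : (l : ℕ) ≠ (i : ℕ) + 1 := by have := l.isLt; omega
      simp [Ymat, hl]

lemma Ymat_charpoly {n : ℕ} (R : Type*) [CommRing R] :
    (Ymat n R).charpoly = X ^ n := by
  rw [Matrix.charpoly_of_upperTriangular]
  · have h0 : ∀ i : Fin n, Ymat n R i i = 0 := by
      intro i; simp [Ymat]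
    simp [h0, Finset.prod_const]
  · intro i j hij
    have hji : (j : ℕ) < (i : ℕ) := hij
    have : (j : ℕ) ≠ (i : ℕ) + 1 := by omega
    simp [Ymat, this]

/-- Let `O` be a complete discrete valuation ring with uniformizer
`ϖ`, let `n ≥ 1` and `m ≥ 1`. For every `M ∈ Mₙ(O)` with `M - Y ∈ ϖ^m·Mₙ(O)` there
exists `g ∈ GLₙ(O)` with `g - 1 ∈ ϖ^m·Mₙ(O)` such that `g M g⁻¹` is a companion-type
matrix whose bottom-row entries all lie in `ϖ^m·O`. -/
theorem stmt6 {O : Type*} [CommRing O] [IsDomain O] [IsDiscreteValuationRing O]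
    [IsAdicComplete (IsLocalRing.maximalIdeal O) O]
    (ϖ : O) (hϖ : Irreducible ϖ)
    (n : ℕ) (hn : 1 ≤ n) (m : ℕ) (hm : 1 ≤ m)
    (M : Matrix (Fin n) (Fin n) O)
    (hM : ∀ i j : Fin n, ϖ ^ m ∣ (M - Ymat n O) i j) :
    ∃ g : GL (Fin n) O,
      (∀ i j : Fin n, ϖ ^ m ∣ ((g : Matrix (Fin n) (Fin n) O) - 1) i j) ∧
      (∀ i j : Fin n,
        let C := (g : Matrix (Fin n) (Fin n) O) * M *
          ((g⁻¹ : GL (Fin n) O) : Matrix (Fin n) (Fin n) O)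
        ((i : ℕ) + 1 < n → C i j = if (j : ℕ) = (i : ℕ) + 1 then 1 else 0) ∧
        ((i : ℕ) + 1 = n → ϖ ^ m ∣ C i j)) := by
  have hn0 : 0 < n := hn
  set z : Fin n := ⟨0, hn0⟩ with hz
  set I : Ideal O := Ideal.span {ϖ ^ m} with hI
  set f : O →+* O ⧸ I := Ideal.Quotient.mk I with hf
  have hdvd : ∀ x : O, ϖ ^ m ∣ x ↔ f x = 0 := by
    intro x
    rw [hf, Ideal.Quotient.eq_zero_iff_mem, hI, Ideal.mem_span_singleton]
  -- M and Y agree mod ϖ^m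
  have hMf : M.map f = (Ymat n O).map f := by
    ext i j
    have h1 := (hdvd _).1 (hM i j)
    rw [Matrix.sub_apply, map_sub, sub_eq_zero] at h1
    simpa [Matrix.map_apply] using h1
  have hpow : ∀ k : ℕ, (M ^ k).map f = ((Ymat n O) ^ k).map f := by
    intro k
    have h1 : (f.mapMatrix (M ^ k)) = f.mapMatrix ((Ymat n O) ^ k) := by
      rw [map_pow, map_pow, RingHom.mapMatrix_apply, RingHom.mapMatrix_apply, hMf]
    simpa [RingHom.mapMatrix_apply] using h1
  have hpowd : ∀ (k : ℕ) (i j : Fin n), ϖ ^ m ∣ (M ^ k) i j - ((Ymat n O) ^ k) i j := by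
    intro k i j
    rw [hdvd, map_sub, sub_eq_zero]
    have h1 := Matrix.ext_iff.mpr (hpow k) i j
    simpa [Matrix.map_apply] using h1
  -- charpoly coefficients are divisible by ϖ^m below degree n
  have hcoeff : ∀ k : ℕ, k < n → ϖ ^ m ∣ M.charpoly.coeff k := by
    intro k hk
    rw [hdvd]
    have h1 : f (M.charpoly.coeff k) = ((M.map f).charpoly).coeff k := by
      rw [Matrix.charpoly_map, Polynomial.coeff_map]
    have h2 : (Ymat n O).map f = Ymat n (O ⧸ I) := by
      ext i j; simp [Ymat, Matrix.map_apply, apply_ite f]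
    rw [h1, hMf, h2, Ymat_charpoly, Polynomial.coeff_X_pow, if_neg hk.ne]
  -- Cayley–Hamilton
  have hdeg : M.charpoly.natDegree = n := by
    rw [Matrix.charpoly_natDegree_eq_dim, Fintype.card_fin]
  have hCH : M ^ n = ∑ k ∈ Finset.range n, (-(M.charpoly.coeff k)) • M ^ k := by
    have h0 := M.aeval_self_charpoly
    rw [Polynomial.aeval_eq_sum_range, hdeg, Finset.sum_range_succ] at h0
    have hlead : M.charpoly.coeff n = 1 := by
      have h2 := M.charpoly_monic
      rw [Polynomial.Monic, Polynomial.leadingCoeff, hdeg] at h2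
      exact h2
    rw [hlead, one_smul] at h0
    have h3 : M ^ n = -(∑ k ∈ Finset.range n, M.charpoly.coeff k • M ^ k) :=
      eq_neg_of_add_eq_zero_right h0
    rw [h3, ← Finset.sum_neg_distrib]
    exact Finset.sum_congr rfl fun k _ => (neg_smul _ _).symm
  -- the conjugating matrix and the companion matrix
  set g : Matrix (Fin n) (Fin n) O := fun i j => (M ^ (i : ℕ)) z j with hg
  set Cm : Matrix (Fin n) (Fin n) O := fun i j =>
    if (i : ℕ) + 1 = n then -(M.charpoly.coeff (j : ℕ))
    else if (j : ℕ) = (i : ℕ) + 1 then 1 else 0 with hCm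
  have hgM : g * M = Cm * g := by
    ext i j
    have hL : (g * M) i j = (M ^ ((i : ℕ) + 1)) z j := by
      rw [pow_succ, Matrix.mul_apply, Matrix.mul_apply]
    rw [hL, Matrix.mul_apply]
    by_cases h : (i : ℕ) + 1 = n
    · have hR : ∀ k : Fin n, Cm i k * g k j
          = (-(M.charpoly.coeff (k : ℕ))) * (M ^ (k : ℕ)) z j := by
        intro k; rw [hCm]; simp [h, hg]
      rw [Finset.sum_congr rfl fun k _ => hR k, h, hCH, Matrix.sum_apply,
        ← Fin.sum_univ_eq_sum_range]
      exact Finset.sum_congr rfl fun k _ => by simp [Matrix.smul_apply, smul_eq_mul]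
    · have h' : (i : ℕ) + 1 < n := by have := i.isLt; omega
      rw [Finset.sum_eq_single (⟨(i : ℕ) + 1, h'⟩ : Fin n)]
      · simp [hCm, hg, h]
      · intro b _ hb
        have hbv : (b : ℕ) ≠ (i : ℕ) + 1 := fun hc => hb (Fin.ext hc)
        simp [hCm, h, hbv]
      · intro hmem; exact absurd (Finset.mem_univ _) hmem
  -- g ≡ 1 mod ϖ^m
  have hg1 : ∀ i j : Fin n, ϖ ^ m ∣ (g - 1) i j := by
    intro i j
    have h3 : (1 : Matrix (Fin n) (Fin n) O) i j = ((Ymat n O) ^ (i : ℕ)) z j := by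
      rw [Ymat_pow, Matrix.one_apply]
      by_cases hij : i = j
      · subst hij; simp [hz]
      · rw [if_neg hij, if_neg]
        simp only [hz]
        simpa [Fin.ext_iff, eq_comm] using hij
    rw [Matrix.sub_apply, h3]
    exact hpowd _ _ _
  -- g is invertible
  have hgf : g.map f = (1 : Matrix (Fin n) (Fin n) O).map f := by
    ext i j
    have h1 := (hdvd _).1 (hg1 i j)
    rw [Matrix.sub_apply, map_sub, sub_eq_zero] at h1
    simpa [Matrix.map_apply] using h1
  have hdet : ϖ ^ m ∣ g.det - 1 := by
    rw [hdvd, map_sub, _root_.map_one, sub_eq_zero, RingHom.map_det, RingHom.mapMatrix_apply,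
      hgf, ← RingHom.mapMatrix_apply, ← RingHom.map_det, Matrix.det_one, _root_.map_one]
  obtain ⟨t, ht⟩ := hdet
  have hmem : -(ϖ ^ m * t) ∈ IsLocalRing.maximalIdeal O := by
    apply neg_mem
    apply Ideal.mul_mem_right
    exact Ideal.pow_mem_of_mem _ ((IsLocalRing.mem_maximalIdeal ϖ).2 hϖ.not_isUnit) m hm
  have hdetu : IsUnit g.det := by
    have h1 := IsLocalRing.isUnit_one_sub_self_of_mem_nonunits _
      ((IsLocalRing.mem_maximalIdeal _).1 hmem)
    rw [sub_neg_eq_add] at h1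
    have h2 : g.det = 1 + ϖ ^ m * t := by rw [← ht]; ring
    rwa [← h2] at h1
  have hu : IsUnit g := (Matrix.isUnit_iff_isUnit_det g).2 hdetu
  refine ⟨hu.unit, ?_, ?_⟩
  · intro i j
    simpa [hu.unit_spec] using hg1 i j
  · intro i j
    have hCeq : (hu.unit : Matrix (Fin n) (Fin n) O) * M *
        ((hu.unit⁻¹ : GL (Fin n) O) : Matrix (Fin n) (Fin n) O) = Cm := by
      calc (hu.unit : Matrix (Fin n) (Fin n) O) * M * ((hu.unit⁻¹ : GL (Fin n) O) : Matrix (Fin n) (Fin n) O)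
          = Cm * ((hu.unit : Matrix (Fin n) (Fin n) O) * ((hu.unit⁻¹ : GL (Fin n) O) : Matrix (Fin n) (Fin n) O)) := by
            rw [hu.unit_spec, hgM, mul_assoc]
      _ = Cm := by rw [Units.mul_inv, mul_one]
    refine ⟨?_, ?_⟩
    · intro hlt
      show ((hu.unit : Matrix (Fin n) (Fin n) O) * M *
        ((hu.unit⁻¹ : GL (Fin n) O) : Matrix (Fin n) (Fin n) O)) i j = _
      rw [hCeq, hCm]
      simp [Nat.ne_of_lt hlt]
    · intro heq
      show ϖ ^ m ∣ ((hu.unit : Matrix (Fin n) (Fin n) O) * M *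
        ((hu.unit⁻¹ : GL (Fin n) O) : Matrix (Fin n) (Fin n) O)) i j
      rw [hCeq, hCm]
      simp only [heq, if_pos rfl]
      exact (dvd_neg).2 (hcoeff _ j.isLt)
end

section
/- Let O be a discrete valuation ring with maximal ideal m, residue field κ, and fraction field F, and let n ≥ 1. Let X ∈ Mₙ(O) be a matrix whose reduction X̄ ∈ Mₙ(κ) is cyclic (there is v̄ ∈ κⁿ with v̄, X̄v̄, …, X̄^{n−1}v̄ a basis of κⁿ). Then for every A ∈ Mₙ(F) such that XA − AX ∈ Mₙ(O), there exists B ∈ Mₙ(O) with XB − BX = XA − AX; that is, [X, Mₙ(F)] ∩ Mₙ(O) = [X, Mₙ(O)]. -/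
open Matrix IsLocalRing

lemma sum_mulVec' {R ι : Type*} [CommRing R] {m k : ℕ} (s : Finset ι)
    (f : ι → Matrix (Fin m) (Fin k) R) (v : Fin k → R) :
    (∑ i ∈ s, f i) *ᵥ v = ∑ i ∈ s, f i *ᵥ v := by
  ext j
  simp only [Matrix.mulVec, dotProduct, Matrix.sum_apply, Finset.sum_apply, Finset.sum_mul]
  exact Finset.sum_comm

/-- A matrix commuting with a cyclic matrix is a polynomial in it. -/
lemma commute_cyclic {K : Type*} [Field K] {n : ℕ} (M : Matrix (Fin n) (Fin n) K)
    (v : Fin n → K) (b : Module.Basis (Fin n) K (Fin n → K)) (hb : ∀ i, b i = M ^ (i : ℕ) *ᵥ v)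
    (C : Matrix (Fin n) (Fin n) K) (hC : C * M = M * C) :
    ∃ c : Fin n → K, C = ∑ i : Fin n, c i • M ^ (i : ℕ) := by
  set c : Fin n → K := fun i => b.repr (C *ᵥ v) i with hc
  set S : Matrix (Fin n) (Fin n) K := ∑ i : Fin n, c i • M ^ (i : ℕ) with hS
  refine ⟨c, ?_⟩
  have hcomm : ∀ j : ℕ, C * M ^ j = M ^ j * C := fun j => (Commute.pow_right hC j)
  have hscomm : ∀ j : ℕ, S * M ^ j = M ^ j * S := by
    intro j
    rw [hS, Finset.sum_mul, Finset.mul_sum]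
    refine Finset.sum_congr rfl fun i _ => ?_
    rw [Matrix.smul_mul, Matrix.mul_smul, ← pow_add, ← pow_add, add_comm]
  have hCv : C *ᵥ v = S *ᵥ v := by
    conv_lhs => rw [← b.sum_repr (C *ᵥ v)]
    rw [hS, sum_mulVec']
    refine Finset.sum_congr rfl fun i _ => ?_
    rw [hb i, Matrix.smul_mulVec]
  apply Matrix.toLin'.injective
  apply b.ext
  intro j
  simp only [Matrix.toLin'_apply]
  rw [hb j, Matrix.mulVec_mulVec, Matrix.mulVec_mulVec, hcomm, hscomm,
    ← Matrix.mulVec_mulVec, ← Matrix.mulVec_mulVec (v := v), hCv]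

lemma mapMatrix_smul' {O K : Type*} [CommRing O] [CommRing K] (ρ : O →+* K) {n : ℕ} (a : O)
    (M : Matrix (Fin n) (Fin n) O) : (a • M).map ρ = ρ a • M.map ρ := by
  ext i j
  simp [Matrix.map_apply]

/-- If the reduction of `X` is cyclic and `[X, A₀] ≡ 0 mod π`, then `A₀` is a polynomial in
`X` plus `π` times an integral matrix. -/
lemma centralizer_lift {O : Type*} [CommRing O] [IsDomain O] [IsDiscreteValuationRing O]
    {n : ℕ} (X : Matrix (Fin n) (Fin n) O)
    (vbar : Fin n → ResidueField O)
    (hcyc : ∃ b : Module.Basis (Fin n) (ResidueField O) (Fin n → ResidueField O),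
      ∀ i : Fin n, b i = (X.map (residue O) ^ (i : ℕ)) *ᵥ vbar)
    (π : O) (hπ : Irreducible π)
    (A₀ : Matrix (Fin n) (Fin n) O)
    (h : ∀ i j, ∃ e : O, (X * A₀ - A₀ * X) i j = π * e) :
    ∃ Q D : Matrix (Fin n) (Fin n) O, Q * X = X * Q ∧ A₀ = Q + π • D := by
  set ρ := residue O with hρdef
  have hρπ : ρ π = 0 :=
    Ideal.Quotient.eq_zero_iff_mem.mpr (by
      rw [hπ.maximalIdeal_eq]; exact Ideal.mem_span_singleton_self π)
  -- the reduction of A₀ commutes with the reduction of X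
  have h0 : ρ.mapMatrix (X * A₀ - A₀ * X) = 0 := by
    ext i j
    obtain ⟨e, he⟩ := h i j
    simp [RingHom.mapMatrix_apply, Matrix.map_apply, he, hρπ]
  rw [map_sub, _root_.map_mul, _root_.map_mul, sub_eq_zero] at h0
  obtain ⟨b, hb⟩ := hcyc
  obtain ⟨c, hc⟩ := commute_cyclic (X.map ρ) vbar b hb (A₀.map ρ)
    (by simpa [RingHom.mapMatrix_apply] using h0.symm)
  -- lift the coefficients
  have hd : ∀ i : Fin n, ∃ d : O, ρ d = c i := fun i => residue_surjective (c i)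
  choose d hdc using hd
  set Q : Matrix (Fin n) (Fin n) O := ∑ i : Fin n, d i • X ^ (i : ℕ) with hQ
  have hQX : Q * X = X * Q := by
    rw [hQ, Finset.sum_mul, Finset.mul_sum]
    refine Finset.sum_congr rfl fun i _ => ?_
    rw [Matrix.smul_mul, Matrix.mul_smul, (Commute.pow_left (Commute.refl X) (i : ℕ)).eq]
  have hQρ : Q.map ρ = A₀.map ρ := by
    rw [← RingHom.mapMatrix_apply, hQ, map_sum]
    rw [hc]
    refine Finset.sum_congr rfl fun i _ => ?_
    rw [RingHom.mapMatrix_apply, mapMatrix_smul', hdc]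
    congr 1
    rw [← RingHom.mapMatrix_apply, map_pow, RingHom.mapMatrix_apply]
  have hsub : ∀ i j, ∃ dd : O, A₀ i j - Q i j = π * dd := by
    intro i j
    have : ρ (A₀ i j - Q i j) = 0 := by
      have := congrFun (congrFun hQρ i) j
      simp only [Matrix.map_apply] at this
      rw [map_sub, this, sub_self]
    have h2 : A₀ i j - Q i j ∈ maximalIdeal O := Ideal.Quotient.eq_zero_iff_mem.mp this
    rw [hπ.maximalIdeal_eq, Ideal.mem_span_singleton] at h2
    obtain ⟨dd, hdd⟩ := h2
    exact ⟨dd, hdd⟩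
  choose D hD using hsub
  refine ⟨Q, Matrix.of D, hQX, ?_⟩
  ext i j
  simp only [Matrix.add_apply, Matrix.smul_apply, Matrix.of_apply, smul_eq_mul]
  linear_combination hD i j

/-- The main induction: if `π^k · A` is integral and `[X, A]` is integral then
`[X, A] = [X, B]` for an integral `B`. -/
lemma key_induction {O : Type*} [CommRing O] [IsDomain O] [IsDiscreteValuationRing O]
    {F : Type*} [Field F] [Algebra O F] [IsFractionRing O F]
    {n : ℕ} (X : Matrix (Fin n) (Fin n) O)
    (vbar : Fin n → ResidueField O)
    (hcyc : ∃ b : Module.Basis (Fin n) (ResidueField O) (Fin n → ResidueField O),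
      ∀ i : Fin n, b i = (X.map (residue O) ^ (i : ℕ)) *ᵥ vbar)
    (π : O) (hπ : Irreducible π) (k : ℕ) :
    ∀ A : Matrix (Fin n) (Fin n) F,
      (∃ A₀ : Matrix (Fin n) (Fin n) O,
        A₀.map (algebraMap O F) = algebraMap O F (π ^ k) • A) →
      (∀ i j : Fin n, ∃ c : O,
        (X.map (algebraMap O F) * A - A * X.map (algebraMap O F)) i j = algebraMap O F c) →
      ∃ B : Matrix (Fin n) (Fin n) O,
        X.map (algebraMap O F) * A - A * X.map (algebraMap O F)
          = (X * B - B * X).map (algebraMap O F) := by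
  set φ := algebraMap O F with hφ
  have hinj : Function.Injective φ := IsFractionRing.injective O F
  have hcommmap : ∀ M : Matrix (Fin n) (Fin n) O,
      (X * M - M * X).map φ = X.map φ * M.map φ - M.map φ * X.map φ := by
    intro M
    rw [Matrix.map_sub _ (map_sub _), Matrix.map_mul, Matrix.map_mul]
  induction k with
  | zero =>
    rintro A ⟨A₀, hA₀⟩ _
    rw [pow_zero, _root_.map_one, one_smul] at hA₀
    exact ⟨A₀, by rw [hcommmap, hA₀]⟩
  | succ k ih =>
    rintro A ⟨A₀, hA₀⟩ hcA
    have hu : φ (π ^ (k + 1)) ≠ 0 :=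
      fun h => pow_ne_zero (k + 1) hπ.ne_zero (hinj (by rwa [map_zero]))
    have hu' : φ (π ^ k) ≠ 0 :=
      fun h => pow_ne_zero k hπ.ne_zero (hinj (by rwa [map_zero]))
    -- the commutator [X, A₀] is divisible by π
    have hmapc : (X * A₀ - A₀ * X).map φ
        = φ (π ^ (k + 1)) • (X.map φ * A - A * X.map φ) := by
      rw [hcommmap, hA₀, Matrix.mul_smul, Matrix.smul_mul, smul_sub]
    have hdvd : ∀ i j, ∃ e : O, (X * A₀ - A₀ * X) i j = π * e := by
      intro i j
      obtain ⟨c, hc⟩ := hcA i j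
      refine ⟨π ^ k * c, hinj ?_⟩
      have h1 : ((X * A₀ - A₀ * X).map φ) i j
          = φ (π ^ (k + 1)) * ((X.map φ * A - A * X.map φ) i j) := by
        rw [hmapc, Matrix.smul_apply, smul_eq_mul]
      rw [Matrix.map_apply] at h1
      rw [h1, hc, ← _root_.map_mul]
      congr 1
      ring
    obtain ⟨Q, D, hQX, hQD⟩ := centralizer_lift X vbar hcyc π hπ A₀ hdvd
    set A' : Matrix (Fin n) (Fin n) F := (φ (π ^ k))⁻¹ • D.map φ with hA'
    have h1 : D.map φ = φ (π ^ k) • A' := by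
      rw [hA', smul_smul, mul_inv_cancel₀ hu', one_smul]
    have h2 : φ (π ^ (k + 1)) • A = Q.map φ + φ (π ^ (k + 1)) • A' := by
      rw [← hA₀, hQD, Matrix.map_add _ (map_add _), mapMatrix_smul', h1, smul_smul,
        ← _root_.map_mul, ← pow_succ']
    -- the two commutators agree
    have h3 : X.map φ * A - A * X.map φ = X.map φ * A' - A' * X.map φ := by
      have h4 : φ (π ^ (k + 1)) • (X.map φ * A - A * X.map φ)
          = φ (π ^ (k + 1)) • (X.map φ * A' - A' * X.map φ) := by
        rw [smul_sub, smul_sub, ← Matrix.mul_smul, ← Matrix.smul_mul, h2]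
        have hQf : X.map φ * Q.map φ = Q.map φ * X.map φ := by
          rw [← Matrix.map_mul, ← Matrix.map_mul, hQX]
        rw [Matrix.mul_add, Matrix.add_mul, hQf]
        rw [Matrix.mul_smul, Matrix.smul_mul]
        abel
      ext i j
      have h5 := congrFun (congrFun h4 i) j
      simp only [Matrix.smul_apply, smul_eq_mul] at h5
      exact mul_left_cancel₀ hu h5
    obtain ⟨B, hB⟩ := ih A' ⟨D, h1⟩ (by
      intro i j
      obtain ⟨c, hc⟩ := hcA i j
      exact ⟨c, by rw [← h3]; exact hc⟩)
    exact ⟨B, by rw [h3]; exact hB⟩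

/-- Let `O` be a discrete valuation ring with residue field `κ` and
fraction field `F`, and let `X ∈ Mₙ(O)` have cyclic reduction `X̄ ∈ Mₙ(κ)` (there is
`v̄` with `v̄, X̄v̄, …, X̄^{n-1}v̄` a basis of `κⁿ`). Then every commutator
`[X, A] = XA - AX` with `A ∈ Mₙ(F)` whose entries all lie in `O` is already of the form
`[X, B]` for some `B ∈ Mₙ(O)`; that is, `[X, Mₙ(F)] ∩ Mₙ(O) = [X, Mₙ(O)]`. -/
theorem stmt12 {O : Type*} [CommRing O] [IsDomain O] [IsDiscreteValuationRing O]
    {F : Type*} [Field F] [Algebra O F] [IsFractionRing O F]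
    (n : ℕ) (hn : 1 ≤ n) (X : Matrix (Fin n) (Fin n) O)
    (vbar : Fin n → ResidueField O)
    (hcyc : ∃ b : Module.Basis (Fin n) (ResidueField O) (Fin n → ResidueField O),
      ∀ i : Fin n, b i = (X.map (residue O) ^ (i : ℕ)) *ᵥ vbar)
    (A : Matrix (Fin n) (Fin n) F)
    (hA : ∀ i j : Fin n, ∃ c : O,
      (X.map (algebraMap O F) * A - A * X.map (algebraMap O F)) i j
        = algebraMap O F c) :
    ∃ B : Matrix (Fin n) (Fin n) O,
      X.map (algebraMap O F) * A - A * X.map (algebraMap O F)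
        = (X * B - B * X).map (algebraMap O F) := by
  obtain ⟨π, hπ⟩ := IsDiscreteValuationRing.exists_irreducible O
  set φ := algebraMap O F with hφ
  have hinj : Function.Injective φ := IsFractionRing.injective O F
  -- every entry of A becomes integral after multiplying by a power of π
  have hentry : ∀ i j : Fin n, ∃ m : ℕ, ∃ a : O, φ (π ^ m) * A i j = φ a := by
    intro i j
    obtain ⟨⟨a, s⟩, hs⟩ := IsLocalization.surj (nonZeroDivisors O) (A i j)
    have hs0 : (s : O) ≠ 0 := nonZeroDivisors.coe_ne_zero s
    obtain ⟨m, u, hsu⟩ := IsDiscreteValuationRing.eq_unit_mul_pow_irreducible hs0 hπ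
    refine ⟨m, a * ↑u⁻¹, ?_⟩
    have hu0 : φ (u : O) ≠ 0 := fun h => Units.ne_zero u (hinj (by rwa [map_zero]))
    apply mul_right_cancel₀ hu0
    have lhs : φ (π ^ m) * A i j * φ (u : O) = φ a := by
      rw [mul_comm (φ (π ^ m)) (A i j), mul_assoc, ← _root_.map_mul, mul_comm (π ^ m),
        ← hsu]
      exact hs
    rw [lhs, ← _root_.map_mul, mul_assoc, Units.inv_mul, mul_one]
  choose m a hma using hentry
  set k := Finset.univ.sup (fun p : Fin n × Fin n => m p.1 p.2) with hk
  have hmk : ∀ i j : Fin n, m i j ≤ k := fun i j =>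
    Finset.le_sup (f := fun p : Fin n × Fin n => m p.1 p.2) (Finset.mem_univ (i, j))
  have hA₀ : ∃ A₀ : Matrix (Fin n) (Fin n) O, A₀.map φ = φ (π ^ k) • A := by
    refine ⟨Matrix.of (fun i j => π ^ (k - m i j) * a i j), ?_⟩
    ext i j
    simp only [Matrix.map_apply, Matrix.of_apply, Matrix.smul_apply, smul_eq_mul]
    rw [_root_.map_mul, ← hma i j, ← mul_assoc, ← _root_.map_mul, ← pow_add]
    congr 3
    have := hmk i j
    omega
  exact key_induction X vbar hcyc π hπ k A hA₀ hA
end
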